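/- Discrete pointwise bounds for the nutrient variable (n-component of Theorem 'Pointwise bounds'): suppose n^m_K ∈ [0,1] for every cell K and n : 𝒦 → ℝ solves the discrete n-equation of the upwind DG scheme for some data μ, ν, u : 𝒦 → ℝ. Then n_K ∈ [0,1] for every cell K. -/

import Mathlib

/-- The degenerate mobility `M(v) = K ⬝ (v)₊^p ⬝ (1-v)₊^q`. -/
noncomputable def M (Km : ℝ) (p q : ℕ) (v : ℝ) : ℝ :=
  Km * max v 0 ^ p * max (1 - v) 0 ^ q

/-- The point `v* = p/(p+q)` where the maximum of `M` is attained. -/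
noncomputable def vstar (p q : ℕ) : ℝ := (p:ℝ) / ((p:ℝ) + (q:ℝ))

/-- Increasing part of the mobility. -/
noncomputable def Mup (Km : ℝ) (p q : ℕ) (v : ℝ) : ℝ :=
  if v ≤ vstar p q then M Km p q v else M Km p q (vstar p q)

/-- Decreasing part of the mobility. -/
noncomputable def Mdown (Km : ℝ) (p q : ℕ) (v : ℝ) : ℝ :=
  if v ≤ vstar p q then 0 else M Km p q v - M Km p q (vstar p q)

/-- The upwind edge flux `Φ_{K,L}(μ, v)` between adjacent cells `K` and `L`. -/
noncomputable def Phi (Km : ℝ) (p q : ℕ) {𝒦 : Type*} (μ v : 𝒦 → ℝ) (a b : 𝒦) : ℝ :=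
  max (μ a - μ b) 0 * max (Mup Km p q (v a) + Mdown Km p q (v b)) 0
    - max (-(μ a - μ b)) 0 * max (Mup Km p q (v b) + Mdown Km p q (v a)) 0

/-- The proliferation function `P(u, n) = K_P ⬝ (u)₊^r ⬝ (1-u)₊^s ⬝ (n)₊`. -/
noncomputable def prolif (KP : ℝ) (r s : ℕ) (u n : ℝ) : ℝ :=
  KP * max u 0 ^ r * max (1 - u) 0 ^ s * max n 0



section Aux

lemma vstar_pos {p q : ℕ} (hp : 1 ≤ p) (hq : 1 ≤ q) : 0 < vstar p q := by
  unfold vstar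
  have hp' : (0:ℝ) < p := by exact_mod_cast hp
  have hq' : (0:ℝ) < q := by exact_mod_cast hq
  positivity

lemma vstar_lt_one {p q : ℕ} (hp : 1 ≤ p) (hq : 1 ≤ q) : vstar p q < 1 := by
  unfold vstar
  have hp' : (0:ℝ) < p := by exact_mod_cast hp
  have hq' : (0:ℝ) < q := by exact_mod_cast hq
  rw [div_lt_one (by linarith)]
  linarith

lemma M_nonneg {Km : ℝ} (hKm : 0 ≤ Km) (p q : ℕ) (v : ℝ) : 0 ≤ M Km p q v := by
  unfold M; positivity

lemma M_le_max {Km : ℝ} (hKm : 0 ≤ Km) {p q : ℕ} (hp : 1 ≤ p) (hq : 1 ≤ q) (v : ℝ) :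
    M Km p q v ≤ M Km p q (vstar p q) := by
  have ht0 : 0 < vstar p q := vstar_pos hp hq
  have ht1 : vstar p q < 1 := vstar_lt_one hp hq
  rcases le_or_gt v 0 with hv | hv
  · have : M Km p q v = 0 := by
      unfold M
      rw [show max v 0 = 0 from max_eq_right hv, zero_pow (by omega), mul_zero, zero_mul]
    rw [this]
    exact M_nonneg hKm p q _
  rcases le_or_gt 1 v with hv1 | hv1
  · have : M Km p q v = 0 := by
      unfold M
      rw [show max (1 - v) 0 = 0 from max_eq_right (by linarith), zero_pow (by omega),
        mul_zero]
    rw [this]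
    exact M_nonneg hKm p q _
  -- now 0 < v < 1
  set t := vstar p q with htdef
  have hN : (0:ℝ) < (p:ℝ) + (q:ℝ) := by
    have hp' : (0:ℝ) < p := by exact_mod_cast hp
    have hq' : (0:ℝ) < q := by exact_mod_cast hq
    linarith
  have ht : t = (p:ℝ) / ((p:ℝ) + (q:ℝ)) := rfl
  have h1t : 1 - t = (q:ℝ) / ((p:ℝ) + (q:ℝ)) := by
    rw [ht]; field_simp; ring
  set a := v / t with hadef
  set b := (1 - v) / (1 - t) with hbdef
  have ha : 0 < a := div_pos hv ht0
  have hb : 0 < b := div_pos (by linarith) (by linarith)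
  have hva : v = t * a := by
    rw [hadef, mul_comm, div_mul_cancel₀ _ ht0.ne']
  have hvb : 1 - v = (1 - t) * b := by
    rw [hbdef, mul_comm, div_mul_cancel₀ _ (by linarith : (1:ℝ) - t ≠ 0)]
  have hsum : t * a + (1 - t) * b = 1 := by
    rw [← hva, ← hvb]; ring
  have key : a ^ (t:ℝ) * b ^ ((1 - t):ℝ) ≤ 1 := by
    have := Real.geom_mean_le_arith_mean2_weighted (w₁ := t) (w₂ := 1 - t)
      (p₁ := a) (p₂ := b) ht0.le (by linarith) ha.le hb.le (by ring)
    rw [hsum] at this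
    exact this
  have key2 : a ^ p * b ^ q ≤ 1 := by
    have h0 : (0:ℝ) ≤ a ^ (t:ℝ) * b ^ ((1 - t):ℝ) := by positivity
    have hpow : (a ^ (t:ℝ) * b ^ ((1 - t):ℝ)) ^ (p + q) ≤ 1 :=
      pow_le_one₀ h0 key
    have hexp : (a ^ (t:ℝ) * b ^ ((1 - t):ℝ)) ^ (p + q) = a ^ p * b ^ q := by
      rw [mul_pow, ← Real.rpow_natCast (a ^ (t:ℝ)) (p + q),
        ← Real.rpow_natCast (b ^ ((1 - t):ℝ)) (p + q),
        ← Real.rpow_natCast a p, ← Real.rpow_natCast b q,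
        ← Real.rpow_mul ha.le, ← Real.rpow_mul hb.le]
      congr 2
      · rw [ht]; push_cast; field_simp
      · rw [h1t]; push_cast; field_simp
    rw [hexp] at hpow
    exact hpow
  have hMv : M Km p q v = Km * (t ^ p * (1 - t) ^ q) * (a ^ p * b ^ q) := by
    unfold M
    rw [show max v 0 = v from max_eq_left hv.le,
      show max (1 - v) 0 = 1 - v from max_eq_left (by linarith), hvb, hva,
      mul_pow, mul_pow]
    ring
  have hMt : M Km p q t = Km * (t ^ p * (1 - t) ^ q) := by
    unfold M
    rw [show max t 0 = t from max_eq_left ht0.le,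
      show max (1 - t) 0 = 1 - t from max_eq_left (by linarith)]
    ring
  rw [hMv, hMt]
  have hc : 0 ≤ Km * (t ^ p * (1 - t) ^ q) :=
    mul_nonneg hKm (mul_nonneg (pow_nonneg ht0.le _) (pow_nonneg (by linarith) _))
  calc Km * (t ^ p * (1 - t) ^ q) * (a ^ p * b ^ q)
      ≤ Km * (t ^ p * (1 - t) ^ q) * 1 := mul_le_mul_of_nonneg_left key2 hc
    _ = Km * (t ^ p * (1 - t) ^ q) := by ring

lemma Mup_nonneg {Km : ℝ} (hKm : 0 ≤ Km) (p q : ℕ) (v : ℝ) : 0 ≤ Mup Km p q v := by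
  unfold Mup; split <;> exact M_nonneg hKm p q _

lemma Mup_le_max {Km : ℝ} (hKm : 0 ≤ Km) {p q : ℕ} (hp : 1 ≤ p) (hq : 1 ≤ q) (v : ℝ) :
    Mup Km p q v ≤ M Km p q (vstar p q) := by
  unfold Mup; split
  · exact M_le_max hKm hp hq v
  · exact le_refl _

lemma Mdown_nonpos {Km : ℝ} (hKm : 0 ≤ Km) {p q : ℕ} (hp : 1 ≤ p) (hq : 1 ≤ q) (v : ℝ) :
    Mdown Km p q v ≤ 0 := by
  unfold Mdown; split
  · exact le_refl _
  · linarith [M_le_max hKm hp hq v]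

end Aux

/-- Discrete pointwise bounds for the nutrient variable: any solution of the
discrete `n`-equation of the upwind DG scheme stays in `[0,1]`. -/
theorem discrete_pointwise_bounds_n (Km : ℝ) (hKm : 0 < Km)
    (p q : ℕ) (hp : 1 ≤ p) (hq : 1 ≤ q)
    (KP : ℝ) (hKP : 0 < KP) (r s : ℕ) (hr : 1 ≤ r) (hs : 1 ≤ s)
    {𝒦 : Type*} [Fintype 𝒦]
    (m : 𝒦 → ℝ) (hm : ∀ K, 0 < m K)
    (adj : 𝒦 → 𝒦 → Prop) [DecidableRel adj]
    (hadj_symm : ∀ K L, adj K L → adj L K) (hadj_irrefl : ∀ K, ¬ adj K K)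
    (w : 𝒦 → 𝒦 → ℝ) (hw_symm : ∀ K L, w K L = w L K)
    (hw_pos : ∀ K L, adj K L → 0 < w K L)
    (Δt : ℝ) (hΔt : 0 < Δt) (Cn : ℝ) (hCn : 0 < Cn)
    (δ : ℝ) (hδ : 0 ≤ δ) (P₀ : ℝ) (hP₀ : 0 ≤ P₀)
    (nm : 𝒦 → ℝ) (hnm : ∀ K, nm K ∈ Set.Icc (0:ℝ) 1)
    (μ ν u n : 𝒦 → ℝ)
    (hn : ∀ K, m K * (n K - nm K) / Δt =
      - Cn * (∑ L, if adj K L then w K L * Phi Km p q ν n K L else 0)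
      - δ * P₀ * m K * prolif KP r s (u K) (n K) * max (ν K - μ K) 0) :
    ∀ K, n K ∈ Set.Icc (0:ℝ) 1 := by
  intro K
  have hKm' : (0:ℝ) ≤ Km := hKm.le
  constructor
  · -- lower bound
    by_contra h
    push_neg at h
    have hnK : n K < 0 := h
    -- Mup (n K) = 0
    have hMupK : Mup Km p q (n K) = 0 := by
      have hle : n K ≤ vstar p q := le_of_lt (hnK.trans (vstar_pos hp hq))
      unfold Mup M
      rw [if_pos hle, max_eq_right hnK.le, zero_pow (by omega), mul_zero, zero_mul]
    -- prolif term vanishes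
    have hprolif : prolif KP r s (u K) (n K) = 0 := by
      unfold prolif
      rw [max_eq_right hnK.le, mul_zero]
    -- each flux is nonpositive
    have hPhi : ∀ L, Phi Km p q ν n K L ≤ 0 := by
      intro L
      unfold Phi
      rw [hMupK, zero_add, max_eq_right (Mdown_nonpos hKm' hp hq (n L)), mul_zero,
        zero_sub, neg_nonpos]
      positivity
    have hS : (∑ L, if adj K L then w K L * Phi Km p q ν n K L else 0) ≤ 0 := by
      apply Finset.sum_nonpos
      intro L _
      split
      · next hadj => exact mul_nonpos_of_nonneg_of_nonpos (hw_pos K L hadj).le (hPhi L)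
      · exact le_refl 0
    have hRHS : 0 ≤ m K * (n K - nm K) / Δt := by
      rw [hn K, hprolif]
      have h1 : 0 ≤ - Cn * (∑ L, if adj K L then w K L * Phi Km p q ν n K L else 0) := by
        rw [neg_mul, le_neg, neg_zero]
        exact mul_nonpos_of_nonneg_of_nonpos hCn.le hS
      have h2 : δ * P₀ * m K * 0 * max (ν K - μ K) 0 = 0 := by ring
      rw [h2]
      linarith
    have h1 : 0 ≤ m K * (n K - nm K) := by
      have h2 := mul_nonneg hRHS hΔt.le
      rwa [div_mul_cancel₀ _ hΔt.ne'] at h2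
    have hd : 0 ≤ n K - nm K := by nlinarith [hm K]
    linarith [(hnm K).1]
  · -- upper bound
    by_contra h
    push_neg at h
    have hnK : 1 < n K := h
    have hvK : ¬ n K ≤ vstar p q := not_le.mpr ((vstar_lt_one hp hq).trans hnK)
    have hMnK : M Km p q (n K) = 0 := by
      unfold M
      rw [max_eq_right (by linarith : 1 - n K ≤ 0), zero_pow (by omega), mul_zero]
    have hMdownK : Mdown Km p q (n K) = - M Km p q (vstar p q) := by
      unfold Mdown
      rw [if_neg hvK, hMnK, zero_sub]
    -- each flux is nonnegative
    have hPhi : ∀ L, 0 ≤ Phi Km p q ν n K L := by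
      intro L
      unfold Phi
      rw [hMdownK]
      have hzero : max (Mup Km p q (n L) + -M Km p q (vstar p q)) 0 = 0 :=
        max_eq_right (by linarith [Mup_le_max hKm' hp hq (n L)])
      rw [hzero, mul_zero, sub_zero]
      positivity
    have hS : 0 ≤ (∑ L, if adj K L then w K L * Phi Km p q ν n K L else 0) := by
      apply Finset.sum_nonneg
      intro L _
      split
      · next hadj => exact mul_nonneg (hw_pos K L hadj).le (hPhi L)
      · exact le_refl 0
    have hprolif : 0 ≤ prolif KP r s (u K) (n K) := by
      unfold prolif; positivity
    have hRHS : m K * (n K - nm K) / Δt ≤ 0 := by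
      rw [hn K]
      have h1 : - Cn * (∑ L, if adj K L then w K L * Phi Km p q ν n K L else 0) ≤ 0 := by
        rw [neg_mul, neg_nonpos]
        exact mul_nonneg hCn.le hS
      have h2 : 0 ≤ δ * P₀ * m K * prolif KP r s (u K) (n K) * max (ν K - μ K) 0 := by
        have := (hm K).le
        positivity
      linarith
    have h1 : m K * (n K - nm K) ≤ 0 := by
      have h2 := mul_nonpos_of_nonpos_of_nonneg hRHS hΔt.le
      rwa [div_mul_cancel₀ _ hΔt.ne'] at h2
    have hd : n K - nm K ≤ 0 := by nlinarith [hm K]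
    linarith [(hnm K).2]
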